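/- In the free group F_n with free generators a_1, ..., a_n (n ≥ 2), let H = ⟨a_1⟩ be the cyclic subgroup generated by a_1. Then for any elements g, h ∈ F_n \ H, the set {k ∈ ℤ : g a_1^k h ∈ H} is finite. -/

import Mathlib

open FreeGroup List

section Aux

variable {α : Type*} [DecidableEq α]

/-- The "no cancellation" relation between adjacent letters. -/
def FGRel (p q : α × Bool) : Prop := ¬(p.1 = q.1 ∧ p.2 = !q.2)

lemma chain'_reduce_eq {L : List (α × Bool)} (h : List.Chain' FGRel L) :
    FreeGroup.reduce L = L := by
  induction L with
  | nil => rfl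
  | cons x L ih =>
    rw [FreeGroup.reduce.cons, ih h.tail]
    cases L with
    | nil => rfl
    | cons y t =>
      have hxy : FGRel x y := (List.isChain_cons_cons.mp h).1
      simp only [FGRel] at hxy
      simp [hxy]

lemma chain'_reduce (L : List (α × Bool)) : List.Chain' FGRel (FreeGroup.reduce L) := by
  induction L with
  | nil => exact List.isChain_nil
  | cons x L ih =>
    rw [FreeGroup.reduce.cons]
    rcases hL : FreeGroup.reduce L with _ | ⟨hd, tl⟩
    · exact List.isChain_singleton _
    · rw [hL] at ih
      by_cases hc : x.1 = hd.1 ∧ x.2 = !hd.2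
      · simp only [hc, and_self, if_true]
        exact ih.tail
      · simp only [hc, if_false]
        exact List.isChain_cons_cons.mpr ⟨hc, ih⟩

lemma chain'_toWord (x : FreeGroup α) : List.Chain' FGRel (FreeGroup.toWord x) := by
  rw [← FreeGroup.reduce_toWord]; exact chain'_reduce _

lemma invRev_cons (p : α × Bool) (l : List (α × Bool)) :
    FreeGroup.invRev (p :: l) = FreeGroup.invRev l ++ [(p.1, !p.2)] := by
  simp [FreeGroup.invRev]

lemma invRev_replicate (m : ℕ) (a : α) (b : Bool) :
    FreeGroup.invRev (List.replicate m (a, b)) = List.replicate m (a, !b) := by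
  simp [FreeGroup.invRev]

lemma exists_replicate_mk (i : α) (d : ℤ) :
    ∃ b : Bool, FreeGroup.mk (List.replicate d.natAbs (i, b)) = FreeGroup.of i ^ d := by
  rcases le_or_gt 0 d with hd | hd
  · refine ⟨true, ?_⟩
    have h1 : List.replicate d.natAbs (i, true) = FreeGroup.toWord (FreeGroup.of i ^ d.natAbs) :=
      (FreeGroup.toWord_of_pow i d.natAbs).symm
    rw [h1, FreeGroup.mk_toWord, ← zpow_natCast, Int.natAbs_of_nonneg hd]
  · refine ⟨false, ?_⟩
    have h1 : List.replicate d.natAbs (i, false) =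
        FreeGroup.invRev (List.replicate d.natAbs (i, true)) := by
      rw [invRev_replicate]; simp
    rw [h1, ← FreeGroup.inv_mk]
    have h2 : List.replicate d.natAbs (i, true) = FreeGroup.toWord (FreeGroup.of i ^ d.natAbs) :=
      (FreeGroup.toWord_of_pow i d.natAbs).symm
    rw [h2, FreeGroup.mk_toWord, ← zpow_natCast, ← zpow_neg]
    congr 1
    omega

lemma mk_singleton (i : α) (b : Bool) :
    FreeGroup.mk [(i, b)] = if b then FreeGroup.of i else (FreeGroup.of i)⁻¹ := by
  cases b with
  | true => rfl
  | false =>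
    simp only [if_false, Bool.false_eq_true]
    have : (FreeGroup.of i)⁻¹ = FreeGroup.mk (FreeGroup.invRev [(i, true)]) := by
      rw [← FreeGroup.inv_mk]; rfl
    rw [this]
    simp [FreeGroup.invRev]

/-- Strip the leading letter of a reduced word. -/
lemma strip_head {i : α} {b : Bool} {t : List (α × Bool)} {x : FreeGroup α}
    (hw : FreeGroup.toWord x = (i, b) :: t) :
    ∃ y : FreeGroup α, FreeGroup.toWord y = t ∧
      x = (if b then FreeGroup.of i else (FreeGroup.of i)⁻¹) * y := by
  refine ⟨FreeGroup.mk t, ?_, ?_⟩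
  · rw [FreeGroup.toWord_mk]
    apply chain'_reduce_eq
    have := chain'_toWord x
    rw [hw] at this
    exact this.tail
  · conv_lhs => rw [← FreeGroup.mk_toWord (x := x), hw]
    rw [← mk_singleton, FreeGroup.mul_mk]
    rfl

/-- Key lemma: in a free group, an element commuting with a nonzero power of a
generator lies in the cyclic subgroup generated by that generator. -/
lemma mem_zpowers_of_commute (i : α) :
    ∀ N : ℕ, ∀ x : FreeGroup α, (FreeGroup.toWord x).length ≤ N →
    ∀ d : ℤ, d ≠ 0 → Commute x (FreeGroup.of i ^ d) →
    x ∈ Subgroup.zpowers (FreeGroup.of i) := by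
  intro N
  induction N with
  | zero =>
    intro x hx d _ _
    have : FreeGroup.toWord x = [] := List.eq_nil_of_length_eq_zero (Nat.le_zero.mp hx)
    rw [FreeGroup.toWord_eq_nil_iff.mp this]
    exact one_mem _
  | succ N ih =>
    intro x hx d hd hcomm
    have hca : Commute (FreeGroup.of i) (FreeGroup.of i ^ d) :=
      (Commute.refl (FreeGroup.of i)).zpow_right d
    rcases hw : FreeGroup.toWord x with _ | ⟨⟨j, b⟩, t⟩
    · rw [FreeGroup.toWord_eq_nil_iff.mp hw]; exact one_mem _
    · by_cases hj : j = i
      · subst hj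
        obtain ⟨y, hyt, hxy⟩ := strip_head hw
        set c : FreeGroup α := if b then FreeGroup.of j else (FreeGroup.of j)⁻¹ with hc
        have hcmem : c ∈ Subgroup.zpowers (FreeGroup.of j) := by
          cases b <;> simp [hc] <;> exact Subgroup.inv_mem _ (Subgroup.mem_zpowers _)
        have hccomm : Commute c (FreeGroup.of j ^ d) := by
          cases b <;> simp only [hc, if_true, if_false, Bool.false_eq_true]
          · exact hca.inv_left
          · exact hca
        have hycomm : Commute y (FreeGroup.of j ^ d) := by
          have : y = c⁻¹ * x := by rw [hxy]; group
          rw [this]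
          exact hccomm.inv_left.mul_left hcomm
        have hylen : (FreeGroup.toWord y).length ≤ N := by
          rw [hyt]
          have : (FreeGroup.toWord x).length = t.length + 1 := by rw [hw]; simp
          omega
        have hy := ih y hylen d hd hycomm
        rw [hxy]
        exact Subgroup.mul_mem _ hcmem hy
      · -- first letter is not i; inspect the last letter via x⁻¹
        rcases hw' : FreeGroup.toWord x⁻¹ with _ | ⟨⟨j', b'⟩, t'⟩
        · have : x⁻¹ = 1 := FreeGroup.toWord_eq_nil_iff.mp hw'
          have : x = 1 := by rwa [inv_eq_one] at this
          rw [this]; exact one_mem _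
        · by_cases hj' : j' = i
          · subst hj'
            obtain ⟨y, hyt, hxy⟩ := strip_head hw'
            set c : FreeGroup α := if b' then FreeGroup.of j' else (FreeGroup.of j')⁻¹ with hc
            have hcmem : c ∈ Subgroup.zpowers (FreeGroup.of j') := by
              cases b' <;> simp [hc] <;> exact Subgroup.inv_mem _ (Subgroup.mem_zpowers _)
            have hccomm : Commute c (FreeGroup.of j' ^ d) := by
              cases b' <;> simp only [hc, if_true, if_false, Bool.false_eq_true]
              · exact hca.inv_left
              · exact hca
            have hycomm : Commute y (FreeGroup.of j' ^ d) := by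
              have : y = c⁻¹ * x⁻¹ := by rw [hxy]; group
              rw [this]
              exact hccomm.inv_left.mul_left hcomm.inv_left
            have hylen : (FreeGroup.toWord y).length ≤ N := by
              rw [hyt]
              have h1 : (FreeGroup.toWord x⁻¹).length = t'.length + 1 := by rw [hw']; simp
              have h2 : (FreeGroup.toWord x⁻¹).length = (FreeGroup.toWord x).length := by
                rw [FreeGroup.toWord_inv, FreeGroup.invRev_length]
              omega
            have hy := ih y hylen d hd hycomm
            have : x⁻¹ ∈ Subgroup.zpowers (FreeGroup.of j') := by
              rw [hxy]; exact Subgroup.mul_mem _ hcmem hy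
            exact (Subgroup.inv_mem_iff _).mp this
          · -- contradiction: neither first nor last letter is i
            exfalso
            set w : List (α × Bool) := FreeGroup.toWord x with hwdef
            obtain ⟨bb, hmk⟩ := exists_replicate_mk i d
            set rep : List (α × Bool) := List.replicate d.natAbs (i, bb) with hrep
            have hm : d.natAbs ≠ 0 := Int.natAbs_ne_zero.mpr hd
            obtain ⟨m, hm'⟩ : ∃ m, d.natAbs = m + 1 :=
              ⟨d.natAbs - 1, by omega⟩
            -- the conjugation equation
            have hconj : FreeGroup.of i ^ d = x * FreeGroup.of i ^ d * x⁻¹ := by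
              rw [hcomm]; group
            have hW : x * FreeGroup.of i ^ d * x⁻¹ = FreeGroup.mk (w ++ rep ++ FreeGroup.invRev w) := by
              conv_lhs => rw [← FreeGroup.mk_toWord (x := x), ← hmk, ← hwdef]
              rw [FreeGroup.inv_mk, FreeGroup.mul_mk, FreeGroup.mul_mk]
            -- last letter of w
            have hinv : FreeGroup.invRev w = (j', b') :: t' := by
              rw [← FreeGroup.toWord_inv, hw']
            have hwlast : w = FreeGroup.invRev t' ++ [(j', !b')] := by
              have := congrArg FreeGroup.invRev hinv
              rw [FreeGroup.invRev_invRev, invRev_cons] at this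
              exact this
            -- the big word is reduced
            have hchain : List.Chain' FGRel (w ++ rep ++ FreeGroup.invRev w) := by
              apply List.IsChain.append
              · apply List.IsChain.append
                · exact chain'_toWord x
                · have : FreeGroup.reduce rep = rep := FreeGroup.reduce_replicate _ _
                  rw [← this]; exact chain'_reduce _
                · intro p hp q hq
                  rw [hwlast, List.getLast?_concat] at hp
                  rw [hrep, hm', List.replicate_succ] at hq
                  simp only [List.head?_cons, Option.mem_some_iff] at hp hq
                  subst hp; subst hq
                  simp only [FGRel]
                  rintro ⟨h1, -⟩
                  exact hj' h1
              · have : FreeGroup.reduce (FreeGroup.invRev w) = FreeGroup.invRev w := by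
                  rw [FreeGroup.reduce_invRev, hwdef, FreeGroup.reduce_toWord]
                rw [← this]; exact chain'_reduce _
              · intro p hp q hq
                have hrepne : rep ≠ [] := by
                  rw [hrep, hm', List.replicate_succ]; simp
                rw [List.getLast?_append_of_ne_nil _ hrepne] at hp
                have : rep.getLast? = some (i, bb) := by
                  rw [hrep, hm']
                  rw [List.getLast?_eq_getLast (by simp [List.replicate_succ])]
                  simp [List.getLast_replicate]
                rw [this] at hp
                rw [hinv] at hq
                simp only [List.head?_cons, Option.mem_some_iff] at hp hq
                subst hp; subst hq
                simp only [FGRel]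
                rintro ⟨h1, -⟩
                exact hj' h1.symm
            -- compare lengths
            have htW : FreeGroup.toWord (FreeGroup.of i ^ d) = w ++ rep ++ FreeGroup.invRev w := by
              rw [hconj, hW, FreeGroup.toWord_mk, chain'_reduce_eq hchain]
            have htrep : FreeGroup.toWord (FreeGroup.of i ^ d) = rep := by
              rw [← hmk, FreeGroup.toWord_mk, hrep, FreeGroup.reduce_replicate]
            have hlen := congrArg List.length (htrep.symm.trans htW)
            simp only [List.length_append, FreeGroup.invRev_length] at hlen
            have hwne : w.length = t.length + 1 := by rw [hw]; simp
            omega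

end Aux

/-- In the free group `F_n` on `n ≥ 2` generators, let `H = ⟨a₁⟩` be the cyclic
subgroup generated by the first generator `a₁`.  For any `g, h ∈ F_n \ H`, the set
`{k ∈ ℤ : g a₁^k h ∈ H}` is finite. -/
theorem stmt6 (n : ℕ) (hn : 2 ≤ n)
    (H : Subgroup (FreeGroup (Fin n)))
    (hH : H = Subgroup.zpowers (FreeGroup.of (⟨0, by omega⟩ : Fin n)))
    (g h : FreeGroup (Fin n)) (hg : g ∉ H) (hh : h ∉ H) :
    {k : ℤ | g * (FreeGroup.of (⟨0, by omega⟩ : Fin n)) ^ k * h ∈ H}.Finite := by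
  subst hH
  set i : Fin n := ⟨0, by omega⟩
  set a : FreeGroup (Fin n) := FreeGroup.of i with ha
  apply Set.Subsingleton.finite
  intro k₁ hk₁ k₂ hk₂
  simp only [Set.mem_setOf_eq] at hk₁ hk₂
  obtain ⟨m₁, hm₁⟩ := Subgroup.mem_zpowers_iff.mp hk₁
  obtain ⟨m₂, hm₂⟩ := Subgroup.mem_zpowers_iff.mp hk₂
  have hkey : g * a ^ (k₂ - k₁) * g⁻¹ = a ^ (m₂ - m₁) := by
    have : a ^ (m₂ - m₁) = (g * a ^ k₂ * h) * (g * a ^ k₁ * h)⁻¹ := by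
      rw [← hm₁, ← hm₂]; group
    rw [this]; group
  -- abelianization shows the exponents agree
  have habel : m₂ - m₁ = k₂ - k₁ := by
    let φ : FreeGroup (Fin n) →* Multiplicative ℤ :=
      FreeGroup.lift (fun _ => Multiplicative.ofAdd (1 : ℤ))
    have h1 := congrArg φ hkey
    rw [_root_.map_mul, _root_.map_mul, _root_.map_inv, _root_.map_zpow, _root_.map_zpow] at h1
    have ha' : φ a = Multiplicative.ofAdd (1 : ℤ) := FreeGroup.lift_apply_of
    rw [ha'] at h1
    have h2 := congrArg Multiplicative.toAdd h1
    simp only [toAdd_mul, toAdd_zpow, toAdd_inv, toAdd_ofAdd, smul_eq_mul, mul_one] at h2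
    omega
  by_contra hne
  have hd : k₂ - k₁ ≠ 0 := sub_ne_zero.mpr (Ne.symm hne)
  have hcomm : Commute g (a ^ (k₂ - k₁)) := by
    rw [habel] at hkey
    show g * a ^ (k₂ - k₁) = a ^ (k₂ - k₁) * g
    calc g * a ^ (k₂ - k₁) = (g * a ^ (k₂ - k₁) * g⁻¹) * g := by group
      _ = a ^ (k₂ - k₁) * g := by rw [hkey]
  exact hg (mem_zpowers_of_commute i (FreeGroup.toWord g).length g le_rfl (k₂ - k₁) hd hcomm)
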